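/- Attainment of the dual problem: the dual functional J is bounded above on ℝ^{N+1} and attains its supremum, i.e. there exists ᾱ ∈ ℝ^{N+1} with J(ᾱ) = sup_{α ∈ ℝ^{N+1}} J(α) < +∞. -/

import Mathlib

open MeasureTheory
open scoped ENNReal

/-- The feasible set `𝒳 ∩ 𝒜` of the multicomponent bathtub problem: vectors of
nonnegative integrable phase contents with prescribed masses `m i` whose sum
saturates the constraint `ω` almost everywhere on `Ω`. -/
def feasible {d N : ℕ} (Ω : Set (Fin d → ℝ)) (ω : (Fin d → ℝ) → ℝ)
    (m : Fin (N + 1) → ℝ) (s : Fin (N + 1) → (Fin d → ℝ) → ℝ) : Prop :=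
  (∀ i, IntegrableOn (s i) Ω) ∧
  (∀ i, ∀ᵐ x ∂(volume.restrict Ω), 0 ≤ s i x) ∧
  (∀ i, ∫ x in Ω, s i x = m i) ∧
  (∀ᵐ x ∂(volume.restrict Ω), ∑ i, s i x = ω x)

/-- The primal linear functional `𝓕(s) = Σ_i ∫_Ω F_i s_i dx`. -/
noncomputable def primalF {d N : ℕ} (Ω : Set (Fin d → ℝ))
    (F : Fin (N + 1) → (Fin d → ℝ) → ℝ)
    (s : Fin (N + 1) → (Fin d → ℝ) → ℝ) : ℝ :=
  ∑ i, ∫ x in Ω, F i x * s i x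

/-- The dual functional `J(α) = ∫_Ω (min_j (F_j + α_j)) ω dx − Σ_i α_i m_i`. -/
noncomputable def dualJ {d N : ℕ} (Ω : Set (Fin d → ℝ)) (ω : (Fin d → ℝ) → ℝ)
    (F : Fin (N + 1) → (Fin d → ℝ) → ℝ) (m : Fin (N + 1) → ℝ)
    (α : Fin (N + 1) → ℝ) : ℝ :=
  (∫ x in Ω, (⨅ j, (F j x + α j)) * ω x) - ∑ i, α i * m i

-- Auxiliary lemmas

lemma infle {N : ℕ} (f g : Fin (N+1) → ℝ) (M : ℝ) (h : ∀ j, f j ≤ g j + M) :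
    (⨅ j, f j) ≤ (⨅ j, g j) + M := by
  obtain ⟨j, hj⟩ := exists_eq_ciInf_of_finite (f := g)
  calc (⨅ j, f j) ≤ f j := ciInf_le (Set.finite_range f).bddBelow j
    _ ≤ g j + M := h j
    _ = (⨅ j, g j) + M := by rw [hj]

lemma infabs {N : ℕ} (f g : Fin (N+1) → ℝ) (M : ℝ) (h : ∀ j, |f j - g j| ≤ M) :
    |(⨅ j, f j) - (⨅ j, g j)| ≤ M := by
  rw [abs_sub_le_iff]
  constructor
  · have := infle f g M (fun j => by have := abs_le.1 (h j); linarith)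
    linarith
  · have := infle g f M (fun j => by have := abs_le.1 (h j); linarith)
    linarith

lemma infshift {N : ℕ} (f : Fin (N+1) → ℝ) (c : ℝ) :
    (⨅ j, f j + c) = (⨅ j, f j) + c := by
  apply le_antisymm
  · exact infle _ _ c (fun j => le_refl _)
  · refine le_ciInf fun j => add_le_add_left (ciInf_le (Set.finite_range f).bddBelow j) c


/-- Attainment of the dual problem: the dual functional J is bounded above and
attains its supremum. -/
theorem stmt_13 {d N : ℕ}
    (Ω : Set (Fin d → ℝ)) (hΩ : MeasurableSet Ω)
    (ω : (Fin d → ℝ) → ℝ) (hωint : IntegrableOn ω Ω)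
    (hω0 : ∀ᵐ x ∂(volume.restrict Ω), 0 ≤ ω x)
    (m : Fin (N + 1) → ℝ) (hm : ∀ i, 0 < m i)
    (hmass : ∑ i, m i = ∫ x in Ω, ω x)
    (F : Fin (N + 1) → (Fin d → ℝ) → ℝ)
    (hFmeas : ∀ i, AEStronglyMeasurable (F i) (volume.restrict Ω))
    (hFbdd : ∃ C : ℝ, ∀ i, ∀ᵐ x ∂(volume.restrict Ω), |F i x| ≤ C) :
    ∃ αb : Fin (N + 1) → ℝ, ∀ α : Fin (N + 1) → ℝ,
      dualJ Ω ω F m α ≤ dualJ Ω ω F m αb := by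
  classical
  obtain ⟨C, hC⟩ := hFbdd
  set μ := volume.restrict Ω with hμ
  have hCae : ∀ᵐ x ∂μ, ∀ i, |F i x| ≤ C := MeasureTheory.ae_all_iff.2 hC
  -- a.e. strong measurability of the infimum
  have hinfmeas : ∀ α : Fin (N+1) → ℝ,
      AEStronglyMeasurable (fun x => (⨅ j, (F j x + α j)) * ω x) μ := by
    intro α
    exact ((AEMeasurable.iInf (fun j => ((hFmeas j).aemeasurable.add_const (α j)))).mul
      hωint.aemeasurable).aestronglyMeasurable
  -- integrability of the integrand
  have hint : ∀ α : Fin (N+1) → ℝ,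
      Integrable (fun x => (⨅ j, (F j x + α j)) * ω x) μ := by
    intro α
    obtain ⟨A, hA⟩ : ∃ A : ℝ, ∀ j, |α j| ≤ A := ⟨∑ j, |α j|, fun j =>
      Finset.single_le_sum (f := fun j => |α j|) (fun i _ => abs_nonneg _) (Finset.mem_univ j)⟩
    refine Integrable.mono' (hωint.abs.const_mul (C + A)) (hinfmeas α) ?_
    filter_upwards [hCae] with x hx
    rw [norm_mul, Real.norm_eq_abs, Real.norm_eq_abs, mul_comm]
    have h1 : |⨅ j, (F j x + α j)| ≤ C + A := by
      have := infabs (fun j => F j x + α j) (fun _ => (0:ℝ)) (C + A)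
        (fun j => by
          have h2 := hx j; have h3 := hA j
          have := abs_add_le (F j x) (α j)
          simp only [sub_zero]; linarith)
      simpa [ciInf_const] using this
    calc |ω x| * |⨅ j, (F j x + α j)| ≤ |ω x| * (C + A) :=
          mul_le_mul_of_nonneg_left h1 (abs_nonneg _)
      _ = (C + A) * |ω x| := by ring
  set g : (Fin (N+1) → ℝ) → ℝ := fun α => ∫ x in Ω, (⨅ j, (F j x + α j)) * ω x with hg
  set Φ : (Fin (N+1) → ℝ) → ℝ := dualJ Ω ω F m with hΦdef
  have hΦeq : ∀ α, Φ α = g α - ∑ i, α i * m i := fun α => rfl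
  set L : ℝ := ∫ x in Ω, |ω x| with hL
  have hLnn : 0 ≤ L := integral_nonneg (fun x => abs_nonneg _)
  -- Lipschitz estimate for g
  have hlip : ∀ α β : Fin (N+1) → ℝ, |g α - g β| ≤ L * dist α β := by
    intro α β
    have hsub : g α - g β = ∫ x in Ω,
        ((⨅ j, (F j x + α j)) * ω x - (⨅ j, (F j x + β j)) * ω x) :=
      (integral_sub (hint α) (hint β)).symm
    rw [hsub]
    have habs : ∀ x, |(⨅ j, (F j x + α j)) * ω x - (⨅ j, (F j x + β j)) * ω x|
        ≤ dist α β * |ω x| := by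
      intro x
      rw [← sub_mul, abs_mul]
      refine mul_le_mul_of_nonneg_right ?_ (abs_nonneg _)
      refine infabs _ _ _ (fun j => ?_)
      have := dist_le_pi_dist α β j
      rw [Real.dist_eq] at this
      simpa using this
    calc |∫ x in Ω, ((⨅ j, (F j x + α j)) * ω x - (⨅ j, (F j x + β j)) * ω x)|
        ≤ ∫ x in Ω, |(⨅ j, (F j x + α j)) * ω x - (⨅ j, (F j x + β j)) * ω x| :=
          by
            simpa [Real.norm_eq_abs] using norm_integral_le_integral_norm
              (μ := μ) (fun x => (⨅ j, (F j x + α j)) * ω x - (⨅ j, (F j x + β j)) * ω x)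
      _ ≤ ∫ x in Ω, dist α β * |ω x| := by
          refine integral_mono ((hint α).sub (hint β)).abs (hωint.abs.const_mul _) ?_
          intro x; exact habs x
      _ = dist α β * L := by rw [integral_const_mul _ _]
      _ = L * dist α β := by ring
  have hgcont : Continuous g := by
    refine (lipschitzWith_iff_dist_le_mul (K := L.toNNReal)).2 ?_ |>.continuous
    intro α β
    rw [Real.dist_eq, Real.coe_toNNReal _ hLnn]
    exact hlip α β
  have hcont : Continuous Φ := by
    have : Continuous fun α : Fin (N+1) → ℝ => ∑ i, α i * m i :=
      continuous_finset_sum _ (fun i _ => (continuous_apply i).mul continuous_const)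
    exact hgcont.sub this
  set I : ℝ := ∫ x in Ω, ω x with hI
  -- shift invariance
  have hshift : ∀ (α : Fin (N+1) → ℝ) (c : ℝ), Φ (fun i => α i + c) = Φ α := by
    intro α c
    have h1 : (fun x => (⨅ j, (F j x + (α j + c))) * ω x)
        = fun x => (⨅ j, (F j x + α j)) * ω x + c * ω x := by
      funext x
      have := infshift (fun j => F j x + α j) c
      simp only [← add_assoc] at this ⊢
      rw [this]; ring
    have h2 : g (fun i => α i + c) = g α + c * I := by
      rw [hg]; simp only [h1]
      rw [integral_add (hint α) (hωint.const_mul c), integral_const_mul _ _]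
    have h3 : ∑ i, (α i + c) * m i = (∑ i, α i * m i) + c * I := by
      rw [← hmass]; rw [Finset.mul_sum, ← Finset.sum_add_distrib]
      congr 1; funext i; ring
    rw [hΦeq, hΦeq, h2, h3]; ring
  -- upper bound on the normalized cone
  have hbound : ∀ α : Fin (N+1) → ℝ, (∀ i, 0 ≤ α i) → (∃ k, α k = 0) →
      ∀ j, Φ α ≤ C * I - α j * m j := by
    rintro α hα ⟨k, hk⟩ j
    have hgle : g α ≤ C * I := by
      rw [hg, hI, ← integral_const_mul _ _]
      refine integral_mono_ae (hint α) (hωint.const_mul C) ?_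
      filter_upwards [hCae, hω0] with x hx hωx
      have h1 : (⨅ j, (F j x + α j)) ≤ C := by
        refine le_trans (ciInf_le (Set.finite_range _).bddBelow k) ?_
        rw [hk, add_zero]
        exact (abs_le.1 (hx k)).2
      exact mul_le_mul_of_nonneg_right h1 hωx
    have hsum : α j * m j ≤ ∑ i, α i * m i :=
      Finset.single_le_sum (f := fun i => α i * m i)
        (fun i _ => mul_nonneg (hα i) (hm i).le) (Finset.mem_univ j)
    rw [hΦeq]; linarith
  -- minimum of the masses
  obtain ⟨j₀, -, hj₀⟩ := Finset.exists_mem_eq_inf' (Finset.univ_nonempty (α := Fin (N+1))) m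
  set ε : ℝ := Finset.univ.inf' Finset.univ_nonempty m with hε
  have hεpos : 0 < ε := hj₀ ▸ hm j₀
  have hεle : ∀ j, ε ≤ m j := fun j => Finset.inf'_le m (Finset.mem_univ j)
  set R : ℝ := max 0 ((C * I - Φ 0) / ε) with hR
  have hR0 : 0 ≤ R := le_max_left _ _
  set K : Set (Fin (N+1) → ℝ) := Set.Icc 0 (fun _ => R) with hK
  have hKc : IsCompact K := isCompact_Icc
  have h0K : (0 : Fin (N+1) → ℝ) ∈ K := ⟨le_refl _, fun i => hR0⟩
  obtain ⟨αb, hαbK, hmax⟩ := hKc.exists_isMaxOn ⟨0, h0K⟩ hcont.continuousOn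
  refine ⟨αb, fun α => ?_⟩
  obtain ⟨k, -, hk⟩ := Finset.exists_mem_eq_inf' (Finset.univ_nonempty (α := Fin (N+1))) α
  set c : ℝ := Finset.univ.inf' Finset.univ_nonempty α with hc
  set β : Fin (N+1) → ℝ := fun i => α i - c with hβ
  have hβ0 : ∀ i, 0 ≤ β i := fun i => sub_nonneg.2 (Finset.inf'_le α (Finset.mem_univ i))
  have hβk : β k = 0 := by simp [hβ, ← hk]
  have hΦβ : Φ β = Φ α := by
    have : (fun i => β i + c) = α := by funext i; simp [hβ]
    rw [← this]; exact (hshift β c).symm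
  by_cases hcase : ∀ i, β i ≤ R
  · have hβK : β ∈ K := ⟨fun i => hβ0 i, fun i => hcase i⟩
    calc dualJ Ω ω F m α = Φ β := hΦβ.symm
      _ ≤ Φ αb := hmax hβK
  · push_neg at hcase
    obtain ⟨j, hj⟩ := hcase
    have h1 : Φ β ≤ C * I - β j * m j := hbound β hβ0 ⟨k, hβk⟩ j
    have h2 : β j * ε ≤ β j * m j := mul_le_mul_of_nonneg_left (hεle j) (hβ0 j)
    have h3 : (C * I - Φ 0) / ε < β j := lt_of_le_of_lt (le_max_right _ _) hj
    have h4 : C * I - Φ 0 < β j * ε := by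
      rw [div_lt_iff₀ hεpos] at h3; linarith
    have h5 : Φ β < Φ 0 := by linarith
    calc dualJ Ω ω F m α = Φ β := hΦβ.symm
      _ ≤ Φ 0 := h5.le
      _ ≤ Φ αb := hmax h0K
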